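/- In a Nelson lattice A, the relation defined by x ≡ y iff x² = y² is a congruence with respect to ∧, ∨, and the operation x → y := x² ⇒ y. -/
import Mathlib


/-- A Nelson (residuated) lattice: a bounded lattice with a commutative monoid
operation `mul` (unit `⊤`) residuated by `imp`, which is involutive
(`∼∼a = a` where `∼a = a ⇒ ⊥`) and satisfies the Nelson identity
`((a² ⇒ b) ⊓ ((∼b)² ⇒ ∼a)) ⇒ (a ⇒ b) = ⊤`. -/
structure NelsonStruct (A : Type*) [Lattice A] [BoundedOrder A] where
  mul : A → A → A
  imp : A → A → A
  mul_comm : ∀ a b, mul a b = mul b a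
  mul_assoc : ∀ a b c, mul (mul a b) c = mul a (mul b c)
  top_mul : ∀ a, mul ⊤ a = a
  res : ∀ a b c, mul a b ≤ c ↔ b ≤ imp a c
  involutive : ∀ a, imp (imp a ⊥) ⊥ = a
  nelson : ∀ a b,
    imp ((imp (mul a a) b) ⊓
         (imp (mul (imp b ⊥) (imp b ⊥)) (imp a ⊥))) (imp a b) = ⊤

namespace NelsonStruct

variable {A : Type*} [Lattice A] [BoundedOrder A] (N : NelsonStruct A)

/-- The square `a² = a * a`. -/
def sq (a : A) : A := N.mul a a

/-- The strong negation `∼a = a ⇒ ⊥`. -/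
def sneg (a : A) : A := N.imp a ⊥

end NelsonStruct

namespace NelsonStruct

variable {A : Type*} [Lattice A] [BoundedOrder A] (N : NelsonStruct A)

lemma mul_top' (a : A) : N.mul a ⊤ = a := by rw [N.mul_comm, N.top_mul]

lemma le_iff_imp {a b : A} : a ≤ b ↔ ⊤ ≤ N.imp a b := by
  constructor
  · intro h
    exact (N.res a ⊤ b).mp (by rwa [N.mul_top'])
  · intro h
    have := (N.res a ⊤ b).mpr h
    rwa [N.mul_top'] at this

lemma imp_eq_top {a b : A} : N.imp a b = ⊤ ↔ a ≤ b := by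
  rw [N.le_iff_imp]
  exact ⟨fun h => le_of_eq h.symm, fun h => le_antisymm le_top h⟩

lemma mul_le_left {a b : A} : N.mul a b ≤ a := by
  rw [N.res]
  exact le_trans le_top ((N.le_iff_imp).mp (le_refl a))

lemma mul_le_right {a b : A} : N.mul a b ≤ b := by
  rw [N.mul_comm]; exact N.mul_le_left

lemma mul_mono {a b c d : A} (h1 : a ≤ b) (h2 : c ≤ d) :
    N.mul a c ≤ N.mul b d := by
  have step1 : N.mul a c ≤ N.mul b c := by
    rw [N.mul_comm a c, N.res]
    refine le_trans h1 ?_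
    rw [← N.res, N.mul_comm]
  have step2 : N.mul b c ≤ N.mul b d := by
    rw [N.res]
    refine le_trans h2 ?_
    rw [← N.res]
  exact le_trans step1 step2

lemma mul_imp_le {a b : A} : N.mul a (N.imp a b) ≤ b :=
  (N.res a (N.imp a b) b).mpr (le_refl _)

lemma imp_anti {a b c : A} (h : a ≤ b) : N.imp b c ≤ N.imp a c := by
  rw [← N.res]
  exact le_trans (N.mul_mono h (le_refl _)) N.mul_imp_le

lemma mul_mul_mul (a b c d : A) :
    N.mul (N.mul a b) (N.mul c d) = N.mul (N.mul a c) (N.mul b d) := by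
  rw [N.mul_assoc, N.mul_assoc]
  congr 1
  rw [← N.mul_assoc, N.mul_comm b c, N.mul_assoc]

/-- The key consequence of the Nelson identity: if `a² ≤ b` and
`(∼b)² ≤ ∼a` then `a ≤ b`. -/
lemma crit {a b : A} (h1 : N.mul a a ≤ b)
    (h2 : N.mul (N.imp b ⊥) (N.imp b ⊥) ≤ N.imp a ⊥) : a ≤ b := by
  have e1 : N.imp (N.mul a a) b = ⊤ := (N.imp_eq_top).mpr h1
  have e2 : N.imp (N.mul (N.imp b ⊥) (N.imp b ⊥)) (N.imp a ⊥) = ⊤ :=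
    (N.imp_eq_top).mpr h2
  have h := N.nelson a b
  rw [e1, e2] at h
  simp only [le_refl, inf_of_le_left] at h
  have h' : ⊤ ≤ N.imp a b := by
    have := (N.res ⊤ ⊤ (N.imp a b)).mpr (le_of_eq h.symm)
    rwa [N.top_mul] at this
  exact (N.le_iff_imp).mpr h'

lemma mul_neg_le_bot (a : A) : N.mul a (N.imp a ⊥) ≤ ⊥ := N.mul_imp_le

/-- Square-nilpotency reduction: `z⁴ ≤ ⊥` implies `z² ≤ ⊥`. -/
lemma sq_bot_of_fourth_bot {z : A}
    (h : N.mul (N.mul z z) (N.mul z z) ≤ ⊥) : N.mul z z ≤ ⊥ := by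
  have h3 : N.mul z z ≤ N.imp z ⊥ := by
    refine N.crit (le_trans h bot_le) ?_
    rw [N.involutive]
    exact (N.res (N.mul z z) (N.mul z z) ⊥).mp h
  have h4 : z ≤ N.imp z ⊥ := by
    refine N.crit h3 ?_
    rw [N.involutive]
    exact h3
  exact (N.res z z ⊥).mpr h4

/-- In a Nelson lattice squares are idempotent for `mul`: `u² ≤ u⁴`. -/
lemma sq_le_fourth (u : A) :
    N.mul u u ≤ N.mul (N.mul u u) (N.mul u u) := by
  set q := N.mul u u with hq
  set q' := N.mul q q with hq'
  set w := N.imp q' ⊥ with hw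
  refine N.crit (le_refl q') ?_
  rw [← N.res]
  -- goal : N.mul q (N.mul w w) ≤ ⊥
  have hz : N.mul (N.mul u w) (N.mul u w) = N.mul q (N.mul w w) :=
    N.mul_mul_mul u w u w
  rw [← hz]
  apply N.sq_bot_of_fourth_bot
  rw [hz]
  have h4 : N.mul (N.mul q (N.mul w w)) (N.mul q (N.mul w w))
      = N.mul q' (N.mul (N.mul w w) (N.mul w w)) := by
    rw [N.mul_mul_mul q (N.mul w w) q (N.mul w w)]
  rw [h4]
  have hww : N.mul (N.mul w w) (N.mul w w) ≤ w :=
    le_trans N.mul_le_left N.mul_le_left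
  exact le_trans (N.mul_mono (le_refl q') hww) (N.mul_neg_le_bot q')

lemma sq_sq (u : A) : N.sq (N.sq u) = N.sq u := by
  show N.mul (N.mul u u) (N.mul u u) = N.mul u u
  exact le_antisymm N.mul_le_left (N.sq_le_fourth u)

lemma sq_le (a : A) : N.sq a ≤ a := N.mul_le_left

lemma sq_mono {a b : A} (h : a ≤ b) : N.sq a ≤ N.sq b := N.mul_mono h h

/-- If `a² ≤ b` and `b² ≤ a` then `a² = b²`. -/
lemma sq_eq_of_le {a b : A} (hab : N.sq a ≤ b) (hba : N.sq b ≤ a) :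
    N.sq a = N.sq b := by
  refine le_antisymm ?_ ?_
  · calc N.sq a = N.sq (N.sq a) := (N.sq_sq a).symm
      _ ≤ N.sq b := N.sq_mono hab
  · calc N.sq b = N.sq (N.sq b) := (N.sq_sq b).symm
      _ ≤ N.sq a := N.sq_mono hba

lemma mul_sup (a b c : A) :
    N.mul a (b ⊔ c) = N.mul a b ⊔ N.mul a c := by
  refine le_antisymm ?_ ?_
  · rw [N.res]
    refine sup_le ?_ ?_
    · exact (N.res a b _).mp le_sup_left
    · exact (N.res a c _).mp le_sup_right
  · exact sup_le (N.mul_mono (le_refl a) le_sup_left)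
      (N.mul_mono (le_refl a) le_sup_right)

/-- Product of two "square-zero" elements is `⊥`. -/
lemma mul_bot_of_sq_bot {u v : A} (hu : N.mul u u ≤ ⊥)
    (hv : N.mul v v ≤ ⊥) : N.mul u v ≤ ⊥ := by
  have h : v ≤ N.imp u ⊥ := by
    refine N.crit (le_trans hv bot_le) ?_
    rw [N.involutive]
    exact le_trans hu bot_le
  exact (N.res u v ⊥).mpr h

/-- The cross term: if `x² = y²` and `s² = t²` then `x·s ≤ y ⊔ t`. -/
lemma cross_le {x y s t : A} (hxy : N.sq x = N.sq y)
    (hst : N.sq s = N.sq t) : N.mul x s ≤ y ⊔ t := by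
  have hxy' : N.mul x x = N.mul y y := hxy
  have hst' : N.mul s s = N.mul t t := hst
  refine N.crit ?_ ?_
  · calc N.mul (N.mul x s) (N.mul x s)
        = N.mul (N.mul x x) (N.mul s s) := N.mul_mul_mul x s x s
      _ ≤ N.mul x x := N.mul_le_left
      _ = N.mul y y := hxy'
      _ ≤ y := N.mul_le_left
      _ ≤ y ⊔ t := le_sup_left
  · rw [← N.res]
    set n := N.imp (y ⊔ t) ⊥ with hn
    have hny : n ≤ N.imp y ⊥ := N.imp_anti le_sup_left
    have hnt : n ≤ N.imp t ⊥ := N.imp_anti le_sup_right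
    rw [N.mul_mul_mul x s n n]
    refine le_trans (N.mul_mono (N.mul_mono (le_refl x) hny)
      (N.mul_mono (le_refl s) hnt)) ?_
    apply N.mul_bot_of_sq_bot
    · rw [N.mul_mul_mul x (N.imp y ⊥) x (N.imp y ⊥), hxy',
        ← N.mul_mul_mul y (N.imp y ⊥) y (N.imp y ⊥)]
      exact le_trans (N.mul_mono (N.mul_neg_le_bot y) (N.mul_neg_le_bot y))
        N.mul_le_left
    · rw [N.mul_mul_mul s (N.imp t ⊥) s (N.imp t ⊥), hst',
        ← N.mul_mul_mul t (N.imp t ⊥) t (N.imp t ⊥)]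
      exact le_trans (N.mul_mono (N.mul_neg_le_bot t) (N.mul_neg_le_bot t))
        N.mul_le_left

/-- One half of the `⊔`-congruence. -/
lemma sup_sq_le {x y s t : A} (hxy : N.sq x = N.sq y)
    (hst : N.sq s = N.sq t) : N.sq (x ⊔ s) ≤ y ⊔ t := by
  have hxy' : N.mul x x = N.mul y y := hxy
  have hst' : N.mul s s = N.mul t t := hst
  show N.mul (x ⊔ s) (x ⊔ s) ≤ y ⊔ t
  rw [N.mul_sup]
  refine sup_le ?_ ?_
  · rw [N.mul_comm, N.mul_sup]
    refine sup_le ?_ (N.cross_le hxy hst)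
    calc N.mul x x = N.mul y y := hxy'
      _ ≤ y := N.mul_le_left
      _ ≤ y ⊔ t := le_sup_left
  · rw [N.mul_comm, N.mul_sup]
    refine sup_le ?_ ?_
    · rw [N.mul_comm]
      exact N.cross_le hxy hst
    · calc N.mul s s = N.mul t t := hst'
        _ ≤ t := N.mul_le_left
        _ ≤ y ⊔ t := le_sup_right

/-- One half of the implication-congruence. -/
lemma imp_sq_le {y s t : A} (hst : N.sq s = N.sq t) :
    N.sq (N.imp (N.sq y) s) ≤ N.imp (N.sq y) t := by
  rw [← N.res]
  set q := N.sq y with hqdef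
  set i := N.imp q s with hidef
  have hq : N.mul q q = q := N.sq_sq y
  have hst' : N.mul s s = N.mul t t := hst
  calc N.mul q (N.mul i i)
      = N.mul (N.mul q q) (N.mul i i) := by rw [hq]
    _ = N.mul (N.mul q i) (N.mul q i) := N.mul_mul_mul q q i i
    _ ≤ N.mul s s := N.mul_mono N.mul_imp_le N.mul_imp_le
    _ = N.mul t t := hst'
    _ ≤ t := N.mul_le_left

end NelsonStruct

/-- In a Nelson lattice `A`, the relation `x ≡ y ↔ x² = y²` is a
congruence with respect to `⊓`, `⊔` and the weak implication
`x → y := x² ⇒ y`. -/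
theorem NelsonStruct.sq_congruence {A : Type*} [Lattice A] [BoundedOrder A]
    (N : NelsonStruct A) (x y s t : A)
    (hxy : N.sq x = N.sq y) (hst : N.sq s = N.sq t) :
    N.sq (x ⊓ s) = N.sq (y ⊓ t) ∧
    N.sq (x ⊔ s) = N.sq (y ⊔ t) ∧
    N.sq (N.imp (N.sq x) s) = N.sq (N.imp (N.sq y) t) := by
  have hxly : N.sq x ≤ y := (le_of_eq hxy).trans (N.sq_le y)
  have hylx : N.sq y ≤ x := (le_of_eq hxy.symm).trans (N.sq_le x)
  have hslt : N.sq s ≤ t := (le_of_eq hst).trans (N.sq_le t)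
  have htls : N.sq t ≤ s := (le_of_eq hst.symm).trans (N.sq_le s)
  refine ⟨?_, ?_, ?_⟩
  · refine N.sq_eq_of_le ?_ ?_
    · exact le_inf ((N.sq_mono inf_le_left).trans hxly)
        ((N.sq_mono inf_le_right).trans hslt)
    · exact le_inf ((N.sq_mono inf_le_left).trans hylx)
        ((N.sq_mono inf_le_right).trans htls)
  · exact N.sq_eq_of_le (N.sup_sq_le hxy hst) (N.sup_sq_le hxy.symm hst.symm)
  · rw [hxy]
    exact N.sq_eq_of_le (N.imp_sq_le hst) (N.imp_sq_le hst.symm)
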